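/- For each integer k ≥ 2, set b_k = k/(k² − k + 1) and f_k(ℓ) = (1−1/k)·k·e^{−kℓ} + (1/k)·b_k·e^{−b_k ℓ}, with state-0 CDF F_k(ℓ) = ∫₀^ℓ f_k(u) du and state-1 CDF T_k(ℓ) = ∫₀^ℓ u·f_k(u) du. Then for every ℓ > 0, lim_{k→∞} F_k(ℓ) = 1, and for every M > 0, lim_{k→∞} T_k(M) = 0. -/

import Mathlib

open MeasureTheory Set

/-- The small exponential rate `b_k = k/(k² − k + 1)` of the hyperexponential
experiment. -/
noncomputable def bHE (k : ℕ) : ℝ := (k : ℝ) / ((k : ℝ)^2 - (k : ℝ) + 1)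

/-- State-0 density of the simple hyperexponential experiment of parameter `k`:
`f_k(ℓ) = (1 − 1/k)·k·e^{−kℓ} + (1/k)·b_k·e^{−b_k ℓ}`. -/
noncomputable def fHE (k : ℕ) (ℓ : ℝ) : ℝ :=
  (1 - 1/(k : ℝ)) * (k : ℝ) * Real.exp (-(k : ℝ) * ℓ)
    + (1/(k : ℝ)) * bHE k * Real.exp (-(bHE k) * ℓ)

/-- State-0 CDF of the hyperexponential experiment. -/
noncomputable def FHE (k : ℕ) (ℓ : ℝ) : ℝ := ∫ u in (0:ℝ)..ℓ, fHE k u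

/-- State-1 CDF of the hyperexponential experiment. -/
noncomputable def THE (k : ℕ) (ℓ : ℝ) : ℝ := ∫ u in (0:ℝ)..ℓ, u * fHE k u

lemma intExp (a ℓ : ℝ) (ha : a ≠ 0) :
    ∫ u in (0:ℝ)..ℓ, Real.exp (-(a*u)) = a⁻¹ - a⁻¹ * Real.exp (-(a*ℓ)) := by
  have key : ∀ u : ℝ, HasDerivAt (fun u => -(a⁻¹) * Real.exp (-(a*u)))
      (Real.exp (-(a*u))) u := by
    intro u
    have h1 : HasDerivAt (fun u : ℝ => -(a*u)) (-a) u := by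
      have := ((hasDerivAt_id u).const_mul a).neg; simp only [mul_one] at this; exact this
    have := (h1.exp).const_mul (-(a⁻¹))
    have hinv : a⁻¹ * a = 1 := inv_mul_cancel₀ ha
    exact this.congr_deriv (by linear_combination (Real.exp (-(a*u))) * hinv)
  have := intervalIntegral.integral_eq_sub_of_hasDerivAt
    (fun u _ => key u) ((Real.continuous_exp.comp (by continuity)).intervalIntegrable 0 ℓ)
  rw [this]; simp [Real.exp_zero]; ring

lemma intMulExp (a ℓ : ℝ) (ha : a ≠ 0) :
    ∫ u in (0:ℝ)..ℓ, u * Real.exp (-(a*u)) =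
      a⁻¹*a⁻¹ - (ℓ*a⁻¹ + a⁻¹*a⁻¹) * Real.exp (-(a*ℓ)) := by
  have key : ∀ u : ℝ, HasDerivAt (fun u => -(u*a⁻¹ + a⁻¹*a⁻¹) * Real.exp (-(a*u)))
      (u * Real.exp (-(a*u))) u := by
    intro u
    have h1 : HasDerivAt (fun u : ℝ => -(a*u)) (-a) u := by
      have := ((hasDerivAt_id u).const_mul a).neg; simp only [mul_one] at this; exact this
    have h2 : HasDerivAt (fun u : ℝ => -(u*a⁻¹ + a⁻¹*a⁻¹)) (-a⁻¹) u := by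
      have := (((hasDerivAt_id u).mul_const a⁻¹).add_const (a⁻¹*a⁻¹)).neg
      simp only [one_mul, add_zero] at this; exact this
    have := h2.mul h1.exp
    have hinv : a⁻¹ * a = 1 := inv_mul_cancel₀ ha
    exact this.congr_deriv (by linear_combination ((u + a⁻¹) * Real.exp (-(a*u))) * hinv)
  have := intervalIntegral.integral_eq_sub_of_hasDerivAt
    (fun u _ => key u) ((continuous_id.mul (Real.continuous_exp.comp (by continuity))).intervalIntegrable 0 ℓ)
  rw [this]; simp [Real.exp_zero]; ring

lemma denom_pos (k : ℕ) : 0 < (k : ℝ)^2 - (k : ℝ) + 1 := by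
  nlinarith [sq_nonneg ((k:ℝ) - 1), (Nat.cast_nonneg k : (0:ℝ) ≤ (k:ℝ))]

lemma bHE_pos {k : ℕ} (hk : 1 ≤ k) : 0 < bHE k := by
  have : (1:ℝ) ≤ (k:ℝ) := by exact_mod_cast hk
  exact div_pos (by linarith) (denom_pos k)

lemma FHE_eq {k : ℕ} (hk : 1 ≤ k) (ℓ : ℝ) :
    FHE k ℓ = (1 - 1/(k:ℝ)) * (1 - Real.exp (-((k:ℝ)*ℓ)))
      + (1/(k:ℝ)) * (1 - Real.exp (-(bHE k * ℓ))) := by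
  have hkR : (0:ℝ) < (k:ℝ) := by exact_mod_cast hk
  have hb := bHE_pos hk
  have h1 : ∀ u : ℝ, fHE k u = ((1 - 1/(k:ℝ)) * (k:ℝ)) * Real.exp (-((k:ℝ)*u))
      + ((1/(k:ℝ)) * bHE k) * Real.exp (-(bHE k * u)) := by
    intro u; simp only [fHE]; ring
  have i1 : IntervalIntegrable (fun u => ((1 - 1/(k:ℝ)) * (k:ℝ)) * Real.exp (-((k:ℝ)*u)))
      MeasureTheory.volume 0 ℓ := (by continuity : Continuous _).intervalIntegrable 0 ℓ
  have i2 : IntervalIntegrable (fun u => ((1/(k:ℝ)) * bHE k) * Real.exp (-(bHE k * u)))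
      MeasureTheory.volume 0 ℓ := (by continuity : Continuous _).intervalIntegrable 0 ℓ
  rw [FHE]
  simp_rw [h1]
  rw [intervalIntegral.integral_add i1 i2, intervalIntegral.integral_const_mul,
    intervalIntegral.integral_const_mul, intExp _ _ hkR.ne', intExp _ _ hb.ne']
  field_simp

lemma THE_eq {k : ℕ} (hk : 1 ≤ k) (M : ℝ) :
    THE k M = (1 - 1/(k:ℝ)) * (1/(k:ℝ) - (M + 1/(k:ℝ)) * Real.exp (-((k:ℝ)*M)))
      + ((1/(k:ℝ)) * (bHE k)⁻¹
          - ((1/(k:ℝ)) * M + (1/(k:ℝ)) * (bHE k)⁻¹) * Real.exp (-(bHE k * M))) := by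
  have hkR : (0:ℝ) < (k:ℝ) := by exact_mod_cast hk
  have hb := bHE_pos hk
  have h1 : ∀ u : ℝ, u * fHE k u = ((1 - 1/(k:ℝ)) * (k:ℝ)) * (u * Real.exp (-((k:ℝ)*u)))
      + ((1/(k:ℝ)) * bHE k) * (u * Real.exp (-(bHE k * u))) := by
    intro u; simp only [fHE]; ring
  have i1 : IntervalIntegrable (fun u => ((1 - 1/(k:ℝ)) * (k:ℝ)) * (u * Real.exp (-((k:ℝ)*u))))
      MeasureTheory.volume 0 M := (by continuity : Continuous _).intervalIntegrable 0 M
  have i2 : IntervalIntegrable (fun u => ((1/(k:ℝ)) * bHE k) * (u * Real.exp (-(bHE k * u))))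
      MeasureTheory.volume 0 M := (by continuity : Continuous _).intervalIntegrable 0 M
  rw [THE]
  simp_rw [h1]
  rw [intervalIntegral.integral_add i1 i2, intervalIntegral.integral_const_mul,
    intervalIntegral.integral_const_mul, intMulExp _ _ hkR.ne', intMulExp _ _ hb.ne']
  field_simp

lemma bHE_tendsto_zero : Filter.Tendsto (fun k : ℕ => bHE k) Filter.atTop (nhds 0) := by
  have h2 : Filter.Tendsto (fun k : ℕ => 2 * (1/(k:ℝ))) Filter.atTop (nhds 0) := by
    simpa using (tendsto_one_div_atTop_nhds_zero_nat (𝕜 := ℝ)).const_mul 2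
  apply squeeze_zero' (g := fun k : ℕ => 2 * (1/(k:ℝ))) ?_ ?_ h2
  · filter_upwards [Filter.eventually_ge_atTop 1] with k hk
    exact (bHE_pos hk).le
  · filter_upwards [Filter.eventually_ge_atTop 1] with k hk
    have hkR : (1:ℝ) ≤ (k:ℝ) := by exact_mod_cast hk
    have h : bHE k ≤ 2/(k:ℝ) := by
      rw [bHE, div_le_div_iff₀ (denom_pos k) (by linarith)]
      nlinarith [sq_nonneg ((k:ℝ) - 1)]
    simpa [div_eq_mul_inv] using h

lemma A_tendsto_one : Filter.Tendsto (fun k : ℕ => (1/(k:ℝ)) * (bHE k)⁻¹) Filter.atTop (nhds 1) := by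
  have heq : ∀ᶠ k : ℕ in Filter.atTop,
      1 - 1/(k:ℝ) + (1/(k:ℝ)) * (1/(k:ℝ)) = (1/(k:ℝ)) * (bHE k)⁻¹ := by
    filter_upwards [Filter.eventually_ge_atTop 1] with k hk
    have hkR : (0:ℝ) < (k:ℝ) := by exact_mod_cast hk
    have hd := denom_pos k
    rw [bHE]
    field_simp
  have : Filter.Tendsto (fun k : ℕ => 1 - 1/(k:ℝ) + (1/(k:ℝ)) * (1/(k:ℝ)))
      Filter.atTop (nhds 1) := by
    have h := tendsto_one_div_atTop_nhds_zero_nat (𝕜 := ℝ)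
    have hc : Filter.Tendsto (fun _ : ℕ => (1:ℝ)) Filter.atTop (nhds 1) := tendsto_const_nhds
    have := (hc.sub h).add (h.mul h)
    simpa using this
  exact this.congr' heq

/-- Weak convergence of the hyperexponential experiment to the perfect experiment, in
pointwise-CDF form: in state 0 all mass concentrates near `0` (`F_k(ℓ) → 1` for every
`ℓ > 0`), and in state 1 all mass escapes beyond every finite threshold
(`T_k(M) → 0` for every `M > 0`). -/
theorem stmt_19 :
    (∀ ℓ : ℝ, 0 < ℓ →
      Filter.Tendsto (fun k : ℕ => FHE k ℓ) Filter.atTop (nhds 1)) ∧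
    (∀ M : ℝ, 0 < M →
      Filter.Tendsto (fun k : ℕ => THE k M) Filter.atTop (nhds 0)) := by
  have hone := tendsto_one_div_atTop_nhds_zero_nat (𝕜 := ℝ)
  have hnat : Filter.Tendsto (fun k : ℕ => (k:ℝ)) Filter.atTop Filter.atTop :=
    tendsto_natCast_atTop_atTop
  constructor
  · intro ℓ hℓ
    have hek : Filter.Tendsto (fun k : ℕ => Real.exp (-((k:ℝ)*ℓ))) Filter.atTop (nhds 0) :=
      Real.tendsto_exp_neg_atTop_nhds_zero.comp (hnat.atTop_mul_const hℓ)
    have heb : Filter.Tendsto (fun k : ℕ => Real.exp (-(bHE k * ℓ))) Filter.atTop (nhds 1) := by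
      have h0 : Filter.Tendsto (fun k : ℕ => -(bHE k * ℓ)) Filter.atTop (nhds 0) := by
        simpa using (bHE_tendsto_zero.mul_const ℓ).neg
      have := (Real.continuous_exp.tendsto 0).comp h0
      simpa [Function.comp_def] using this
    have key : Filter.Tendsto (fun k : ℕ =>
        (1 - 1/(k:ℝ)) * (1 - Real.exp (-((k:ℝ)*ℓ)))
          + (1/(k:ℝ)) * (1 - Real.exp (-(bHE k * ℓ)))) Filter.atTop (nhds 1) := by
      have hc : Filter.Tendsto (fun _ : ℕ => (1:ℝ)) Filter.atTop (nhds 1) := tendsto_const_nhds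
      have := ((hc.sub hone).mul (hc.sub hek)).add (hone.mul (hc.sub heb))
      norm_num at this
      simpa [one_div] using this
    apply key.congr'
    filter_upwards [Filter.eventually_ge_atTop 1] with k hk
    exact (FHE_eq hk ℓ).symm
  · intro M hM
    have hek : Filter.Tendsto (fun k : ℕ => Real.exp (-((k:ℝ)*M))) Filter.atTop (nhds 0) :=
      Real.tendsto_exp_neg_atTop_nhds_zero.comp (hnat.atTop_mul_const hM)
    have heb : Filter.Tendsto (fun k : ℕ => Real.exp (-(bHE k * M))) Filter.atTop (nhds 1) := by
      have h0 : Filter.Tendsto (fun k : ℕ => -(bHE k * M)) Filter.atTop (nhds 0) := by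
        simpa using (bHE_tendsto_zero.mul_const M).neg
      have := (Real.continuous_exp.tendsto 0).comp h0
      simpa [Function.comp_def] using this
    have key : Filter.Tendsto (fun k : ℕ =>
        (1 - 1/(k:ℝ)) * (1/(k:ℝ) - (M + 1/(k:ℝ)) * Real.exp (-((k:ℝ)*M)))
          + ((1/(k:ℝ)) * (bHE k)⁻¹
              - ((1/(k:ℝ)) * M + (1/(k:ℝ)) * (bHE k)⁻¹) * Real.exp (-(bHE k * M))))
        Filter.atTop (nhds 0) := by
      have hc : Filter.Tendsto (fun _ : ℕ => (1:ℝ)) Filter.atTop (nhds 1) := tendsto_const_nhds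
      have hcM : Filter.Tendsto (fun _ : ℕ => M) Filter.atTop (nhds M) := tendsto_const_nhds
      have t1 := (hc.sub hone).mul (hone.sub ((hcM.add hone).mul hek))
      have t2 := A_tendsto_one.sub
        (((hone.mul_const M).add A_tendsto_one).mul heb)
      have := t1.add t2
      norm_num at this
      simpa [one_div] using this
    apply key.congr'
    filter_upwards [Filter.eventually_ge_atTop 1] with k hk
    exact (THE_eq hk M).symm
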